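/- arXiv:1412.0122 — 5 statements merged into one kernel-verified Lean document; each statement's English description precedes it below -/
import Mathlib

section
/- If Y = Y₁ - Y₂ where Y₁, Y₂ are nonzero effective divisors (nonnegative integer combinations of basis vectors, not both zero at once) without common components on a negative definite intersection lattice in which every nonzero effective divisor Y' satisfies (Y'·Y') ≤ -2, then (Y·Y) ≤ -4. Consequently, any divisor Y with (Y·Y) = -2 or (Y·Y) = -3 is either effective or anti-effective. -/
open Finset

/-- The quadratic/bilinear value `(Y · Y')` of the intersection form given by matrix `M`. -/
def interForm (n : ℕ) (M : Fin n → Fin n → ℤ) (Y Y' : Fin n → ℤ) : ℤ :=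
  ∑ i, ∑ j, Y i * M i j * Y' j

lemma interForm_sub (n : ℕ) (M : Fin n → Fin n → ℤ) (A B : Fin n → ℤ) :
    interForm n M (A - B) (A - B) =
      interForm n M A A - interForm n M A B - interForm n M B A + interForm n M B B := by
  simp only [interForm, Pi.sub_apply, ← Finset.sum_sub_distrib, ← Finset.sum_add_distrib]
  congr 1; ext i; congr 1; ext j; ring

lemma interForm_cross_nonneg (n : ℕ) (M : Fin n → Fin n → ℤ)
    (hoff : ∀ i j, i ≠ j → 0 ≤ M i j) (A B : Fin n → ℤ)
    (hA : ∀ i, 0 ≤ A i) (hB : ∀ i, 0 ≤ B i) (hcc : ∀ i, A i = 0 ∨ B i = 0) :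
    0 ≤ interForm n M A B := by
  apply Finset.sum_nonneg; intro i _
  apply Finset.sum_nonneg; intro j _
  rcases eq_or_ne i j with rfl | hij
  · rcases hcc i with h | h <;> simp [h]
  · exact mul_nonneg (mul_nonneg (hA i) (hoff i j hij)) (hB j)

theorem stmt_0 (n : ℕ) (M : Fin n → Fin n → ℤ)
    (hsymm : ∀ i j, M i j = M j i)
    (hdiag : ∀ i, M i i ≤ -2)
    (hoff : ∀ i j, i ≠ j → 0 ≤ M i j)
    (hnegdef : ∀ x : Fin n → ℤ, x ≠ 0 → interForm n M x x < 0)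
    (hrat : ∀ Y' : Fin n → ℤ, (∀ i, 0 ≤ Y' i) → Y' ≠ 0 → interForm n M Y' Y' ≤ -2) :
    (∀ Y₁ Y₂ : Fin n → ℤ, (∀ i, 0 ≤ Y₁ i) → (∀ i, 0 ≤ Y₂ i) → Y₁ ≠ 0 → Y₂ ≠ 0 →
      (∀ i, Y₁ i = 0 ∨ Y₂ i = 0) →
      interForm n M (Y₁ - Y₂) (Y₁ - Y₂) ≤ -4) ∧
    (∀ Y : Fin n → ℤ, (interForm n M Y Y = -2 ∨ interForm n M Y Y = -3) →
      (∀ i, 0 ≤ Y i) ∨ (∀ i, Y i ≤ 0)) := by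
  have main : ∀ Y₁ Y₂ : Fin n → ℤ, (∀ i, 0 ≤ Y₁ i) → (∀ i, 0 ≤ Y₂ i) → Y₁ ≠ 0 → Y₂ ≠ 0 →
      (∀ i, Y₁ i = 0 ∨ Y₂ i = 0) →
      interForm n M (Y₁ - Y₂) (Y₁ - Y₂) ≤ -4 := by
    intro Y₁ Y₂ h1 h2 hne1 hne2 hcc
    have e := interForm_sub n M Y₁ Y₂
    have c1 := interForm_cross_nonneg n M hoff Y₁ Y₂ h1 h2 hcc
    have c2 := interForm_cross_nonneg n M hoff Y₂ Y₁ h2 h1 (fun i => (hcc i).symm)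
    have r1 := hrat Y₁ h1 hne1
    have r2 := hrat Y₂ h2 hne2
    omega
  refine ⟨main, ?_⟩
  intro Y hY
  by_contra h
  push_neg at h
  obtain ⟨⟨i, hi⟩, ⟨j, hj⟩⟩ := h
  set Y₁ : Fin n → ℤ := fun k => max (Y k) 0 with hY1
  set Y₂ : Fin n → ℤ := fun k => max (-(Y k)) 0 with hY2
  have hsub : Y = Y₁ - Y₂ := by funext k; simp only [hY1, hY2, Pi.sub_apply]; omega
  have hne1 : Y₁ ≠ 0 := by
    intro h0
    have := congrFun h0 j
    simp only [hY1, Pi.zero_apply] at this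
    omega
  have hne2 : Y₂ ≠ 0 := by
    intro h0
    have := congrFun h0 i
    simp only [hY2, Pi.zero_apply] at this
    omega
  have := main Y₁ Y₂ (fun k => le_max_right _ _) (fun k => le_max_right _ _) hne1 hne2
    (fun k => by simp [hY1, hY2]; omega)
  rw [← hsub] at this
  omega
end

section
/- Let Γ be a rational triple tree with unique vertex E₀ of weight 3 and all other vertices of weight 2, and let Y = Σ aᵢEᵢ be an effective root (a nonzero effective divisor with (Y·Y) ∈ {-2,-3} and arithmetic genus pₐ(Y) ≤ 0). Then (Y·Y) = -2 if and only if a₀ = 0, and (Y·Y) = -3 if and only if a₀ = 1. -/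
open Finset

def treeM (n : ℕ) (G : SimpleGraph (Fin n)) [DecidableRel G.Adj] (w : Fin n → ℤ)
    (i j : Fin n) : ℤ :=
  if i = j then -w i else if G.Adj i j then 1 else 0

def quadForm (n : ℕ) (M : Fin n → Fin n → ℤ) (Y : Fin n → ℤ) : ℤ :=
  ∑ i, ∑ j, Y i * M i j * Y j

lemma quadForm_parity (n : ℕ) (M : Fin n → Fin n → ℤ) (hsym : ∀ i j, M i j = M j i)
    (Y : Fin n → ℤ) : 2 ∣ quadForm n M Y - ∑ i, Y i * M i i * Y i := by
  have key : ((quadForm n M Y : ℤ) : ZMod 2) = ((∑ i, Y i * M i i * Y i : ℤ) : ZMod 2) := by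
    have h1 : ((quadForm n M Y : ℤ) : ZMod 2) =
        ∑ p ∈ (univ : Finset (Fin n)) ×ˢ univ, ((Y p.1 * M p.1 p.2 * Y p.2 : ℤ) : ZMod 2) := by
      rw [quadForm]
      push_cast
      rw [Finset.sum_product]
    rw [h1, ← Finset.diag_union_offDiag (univ : Finset (Fin n)),
      Finset.sum_union (Finset.disjoint_diag_offDiag _)]
    have h2 : ∑ p ∈ (univ : Finset (Fin n)).offDiag,
        ((Y p.1 * M p.1 p.2 * Y p.2 : ℤ) : ZMod 2) = 0 := by
      apply Finset.sum_involution (fun p _ => (p.2, p.1))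
      · intro p hp
        have : M p.2 p.1 = M p.1 p.2 := hsym _ _
        simp only [this]
        have : ((Y p.1 * M p.1 p.2 * Y p.2 : ℤ) : ZMod 2) =
            ((Y p.2 * M p.1 p.2 * Y p.1 : ℤ) : ZMod 2) := by ring_nf
        rw [← this]
        have : ∀ x : ZMod 2, x + x = 0 := by decide
        exact this _
      · intro p hp _
        rw [Finset.mem_offDiag] at hp
        exact fun h => hp.2.2 (congrArg Prod.snd h ▸ (congrArg Prod.fst h).symm ▸ rfl)
      · intro p hp
        rw [Finset.mem_offDiag] at hp ⊢
        exact ⟨hp.2.1, hp.1, fun h => hp.2.2 h.symm⟩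
      · intro p hp; rfl
    rw [h2, add_zero, Finset.sum_diag]
    push_cast
    rfl
  have := (ZMod.intCast_eq_intCast_iff _ _ _).mp key
  exact this.symm.dvd

/-- A rational triple tree: vertex `0` has weight `3`, all the others weight `2`,
the intersection matrix is negative definite, and the arithmetic genus
`pₐ(Y) = ½[(Y·Y) + Σ aᵢ(wᵢ-2)] + 1` of every nonzero effective divisor is `≤ 0`.
Then for an effective root `Y`: `(Y·Y) = -2 ↔ a₀ = 0` and `(Y·Y) = -3 ↔ a₀ = 1`. -/
theorem stmt_2 (n : ℕ) (G : SimpleGraph (Fin (n + 1))) [DecidableRel G.Adj]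
    (hG : G.IsTree)
    (w : Fin (n + 1) → ℤ) (hw0 : w 0 = 3) (hw : ∀ i, i ≠ 0 → w i = 2)
    (hnegdef : ∀ x : Fin (n + 1) → ℤ, x ≠ 0 → quadForm (n + 1) (treeM (n + 1) G w) x < 0)
    (hrat : ∀ Y' : Fin (n + 1) → ℤ, (∀ i, 0 ≤ Y' i) → Y' ≠ 0 →
      quadForm (n + 1) (treeM (n + 1) G w) Y' + (∑ i, Y' i * (w i - 2)) + 2 ≤ 0)
    (Y : Fin (n + 1) → ℤ) (hYeff : ∀ i, 0 ≤ Y i) (hYne : Y ≠ 0)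
    (hroot : quadForm (n + 1) (treeM (n + 1) G w) Y = -2 ∨
      quadForm (n + 1) (treeM (n + 1) G w) Y = -3) :
    (quadForm (n + 1) (treeM (n + 1) G w) Y = -2 ↔ Y 0 = 0) ∧
    (quadForm (n + 1) (treeM (n + 1) G w) Y = -3 ↔ Y 0 = 1) := by
  have hsym : ∀ i j, treeM (n + 1) G w i j = treeM (n + 1) G w j i := by
    intro i j
    unfold treeM
    by_cases h : i = j
    · subst h; rfl
    · simp [h, Ne.symm h, G.adj_comm]
  have hM : ∀ i, treeM (n + 1) G w i i = -(w i) := fun i => by simp [treeM]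
  have h1 : 2 ∣ quadForm (n + 1) (treeM (n + 1) G w) Y -
      ∑ i, Y i * treeM (n + 1) G w i i * Y i := quadForm_parity _ _ hsym Y
  have hS2 : ∑ i, Y i * treeM (n + 1) G w i i * Y i =
      -(w 0) * (Y 0 * Y 0) +
        ∑ i ∈ (univ : Finset (Fin (n + 1))).erase 0, -(w i) * (Y i * Y i) := by
    rw [← Finset.add_sum_erase _ _ (mem_univ 0)]
    congr 1
    · rw [hM]; ring
    · exact Finset.sum_congr rfl fun i _ => by rw [hM]; ring
  have h2 : 2 ∣ (∑ i, Y i * treeM (n + 1) G w i i * Y i) - Y 0 := by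
    rw [hS2, hw0]
    have hsq : 2 ∣ Y 0 * Y 0 - Y 0 := by
      rcases Int.even_or_odd (Y 0) with ⟨k, hk⟩ | ⟨k, hk⟩
      · exact ⟨k * Y 0 - k, by rw [hk]; ring⟩
      · exact ⟨k * Y 0, by rw [hk]; ring⟩
    have hrest : 2 ∣ ∑ i ∈ (univ : Finset (Fin (n + 1))).erase 0, -(w i) * (Y i * Y i) :=
      Finset.dvd_sum fun i hi => by
        rw [hw i (Finset.ne_of_mem_erase hi)]
        exact ⟨-(Y i * Y i), by ring⟩
    obtain ⟨a, ha⟩ := hsq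
    obtain ⟨b, hb⟩ := hrest
    exact ⟨-2 * Y 0 - 3 * a + b, by rw [hb]; linarith⟩
  have hpar : 2 ∣ quadForm (n + 1) (treeM (n + 1) G w) Y - Y 0 := by omega
  have hS1 : ∑ i, Y i * (w i - 2) = Y 0 := by
    rw [Finset.sum_eq_single 0]
    · rw [hw0]; ring
    · intro i _ hi; rw [hw i hi]; ring
    · simp
  have hle := hrat Y hYeff hYne
  rw [hS1] at hle
  have h0 := hYeff 0
  rcases hroot with h | h <;> rw [h] at hpar hle ⊢ <;> omega
end

section
/- Let Γ be a triple Dynkin diagram whose underlying diagram Γ₀ (obtained by changing the weight-3 vertex back to weight 2) is a Dynkin diagram of type A, D or E. Identifying divisors in both lattices via the common basis E₀,…,Eₙ, every root of Γ (divisor Y with (Y·Y)_Γ ∈ {-2,-3}) is a root of Γ₀ (satisfies (Y·Y)_{Γ₀} = -2). Moreover, (Y·Y)_Γ = (Y·Y)_{Γ₀} - a₀², and if (Y·Y)_Γ = -2 then a₀ = 0, while if (Y·Y)_Γ = -3 then a₀ = ±1. -/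
open Finset

lemma quadForm_even (n : ℕ) (M : Fin n → Fin n → ℤ)
    (hsymm : ∀ i j, M i j = M j i) (hdiag : ∀ i, (2 : ℤ) ∣ M i i) (Y : Fin n → ℤ) :
    (2 : ℤ) ∣ quadForm n M Y := by
  have key : ((quadForm n M Y : ℤ) : ZMod 2) = 0 → (2 : ℤ) ∣ quadForm n M Y := by
    intro h
    exact_mod_cast (ZMod.intCast_zmod_eq_zero_iff_dvd (quadForm n M Y) 2).mp h
  apply key
  unfold quadForm
  push_cast
  rw [← Finset.sum_product']
  rw [Finset.univ_product_univ]
  rw [← Finset.sum_filter_add_sum_filter_not Finset.univ (fun p : Fin n × Fin n => p.1 = p.2)]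
  have h1 : ∑ p ∈ Finset.univ.filter (fun p : Fin n × Fin n => p.1 = p.2),
      ((Y p.1 : ZMod 2) * (M p.1 p.2 : ZMod 2) * (Y p.2 : ZMod 2)) = 0 := by
    apply Finset.sum_eq_zero
    intro p hp
    simp only [Finset.mem_filter] at hp
    obtain ⟨k, hk⟩ := hdiag p.1
    rw [← hp.2, hk]
    push_cast
    have : (2 : ZMod 2) = 0 := by decide
    rw [this]
    ring
  have h2 : ∑ p ∈ Finset.univ.filter (fun p : Fin n × Fin n => ¬ p.1 = p.2),
      ((Y p.1 : ZMod 2) * (M p.1 p.2 : ZMod 2) * (Y p.2 : ZMod 2)) = 0 := by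
    apply Finset.sum_involution (fun p _ => Prod.swap p)
    · intro p hp
      simp only [Prod.swap]
      rw [hsymm p.2 p.1]
      have : ∀ x : ZMod 2, x + x = 0 := by decide
      rw [show (Y p.2 : ZMod 2) * (M p.1 p.2 : ZMod 2) * (Y p.1 : ZMod 2)
          = (Y p.1 : ZMod 2) * (M p.1 p.2 : ZMod 2) * (Y p.2 : ZMod 2) by ring]
      exact this _
    · intro p hp _
      simp only [Finset.mem_filter] at hp
      intro h
      exact hp.2 (congrArg Prod.fst h).symm
    · intro p hp
      simp only [Finset.mem_filter, Finset.mem_univ, true_and] at hp ⊢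
      exact fun h => hp h.symm
    · intro p hp
      rfl
  rw [h1, h2, add_zero]

lemma treeM_symm (n : ℕ) (G : SimpleGraph (Fin n)) [DecidableRel G.Adj] (w : Fin n → ℤ)
    (i j : Fin n) : treeM n G w i j = treeM n G w j i := by
  unfold treeM
  rcases eq_or_ne i j with rfl | h
  · rfl
  · simp [h, h.symm, G.adj_comm]

lemma quadForm_diff (n : ℕ) (G : SimpleGraph (Fin (n + 1))) [DecidableRel G.Adj]
    (wΓ : Fin (n + 1) → ℤ) (hwΓ0 : wΓ 0 = 3) (hwΓ : ∀ i, i ≠ 0 → wΓ i = 2)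
    (w₀ : Fin (n + 1) → ℤ) (hw₀ : ∀ i, w₀ i = 2) (Y : Fin (n + 1) → ℤ) :
    quadForm (n + 1) (treeM (n + 1) G wΓ) Y
      = quadForm (n + 1) (treeM (n + 1) G w₀) Y - (Y 0) ^ 2 := by
  unfold quadForm
  have hterm : ∀ i j : Fin (n + 1), Y i * treeM (n + 1) G wΓ i j * Y j
      = Y i * treeM (n + 1) G w₀ i j * Y j
        - (if i = 0 then (if j = 0 then (Y 0) ^ 2 else 0) else 0) := by
    intro i j
    unfold treeM
    rcases eq_or_ne i j with rfl | hij
    · rcases eq_or_ne i 0 with rfl | hi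
      · simp [hwΓ0, hw₀]; ring
      · simp [hi, hwΓ i hi, hw₀ i]
    · rcases eq_or_ne i 0 with rfl | hi
      · have hj : j ≠ 0 := fun h => hij h.symm
        simp [hij, hj]
      · simp [hij, hi]
  simp_rw [hterm]
  simp only [Finset.sum_sub_distrib]
  congr 1
  simp [Finset.sum_ite_eq']

/-- `Γ` is the tree `G` with weight `3` at the vertex `0` and weight `2` elsewhere;
its underlying diagram `Γ₀` has all weights `2` and is assumed to be an ADE Dynkin
diagram (encoded by negative definiteness of its intersection form).  Then
`(Y·Y)_Γ = (Y·Y)_{Γ₀} - a₀²`; every root of `Γ` is a root of `Γ₀`; roots with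
`(Y·Y)_Γ = -2` have `a₀ = 0` and roots with `(Y·Y)_Γ = -3` have `a₀ = ±1`. -/
theorem stmt_3 (n : ℕ) (G : SimpleGraph (Fin (n + 1))) [DecidableRel G.Adj]
    (hG : G.IsTree)
    (wΓ : Fin (n + 1) → ℤ) (hwΓ0 : wΓ 0 = 3) (hwΓ : ∀ i, i ≠ 0 → wΓ i = 2)
    (w₀ : Fin (n + 1) → ℤ) (hw₀ : ∀ i, w₀ i = 2)
    (hADE : ∀ x : Fin (n + 1) → ℤ, x ≠ 0 → quadForm (n + 1) (treeM (n + 1) G w₀) x < 0) :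
    ∀ Y : Fin (n + 1) → ℤ,
      quadForm (n + 1) (treeM (n + 1) G wΓ) Y
        = quadForm (n + 1) (treeM (n + 1) G w₀) Y - (Y 0) ^ 2 ∧
      ((quadForm (n + 1) (treeM (n + 1) G wΓ) Y = -2 ∨
        quadForm (n + 1) (treeM (n + 1) G wΓ) Y = -3) →
        quadForm (n + 1) (treeM (n + 1) G w₀) Y = -2) ∧
      (quadForm (n + 1) (treeM (n + 1) G wΓ) Y = -2 → Y 0 = 0) ∧
      (quadForm (n + 1) (treeM (n + 1) G wΓ) Y = -3 → Y 0 = 1 ∨ Y 0 = -1) := by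
  intro Y
  have hdiff := quadForm_diff n G wΓ hwΓ0 hwΓ w₀ hw₀ Y
  have heven : (2 : ℤ) ∣ quadForm (n + 1) (treeM (n + 1) G w₀) Y := by
    apply quadForm_even
    · exact treeM_symm (n + 1) G w₀
    · intro i
      unfold treeM
      rw [if_pos rfl, hw₀ i]
      exact ⟨-1, by norm_num⟩
  -- key auxiliary facts
  have hsq : 0 ≤ (Y 0) ^ 2 := sq_nonneg _
  have main : ∀ c : ℤ, (c = -2 ∨ c = -3) →
      quadForm (n + 1) (treeM (n + 1) G wΓ) Y = c →
      quadForm (n + 1) (treeM (n + 1) G w₀) Y = -2 ∧ (Y 0) ^ 2 = (-2) - c := by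
    intro c hc hq
    have hY : Y ≠ 0 := by
      intro h0
      rw [h0] at hq
      simp [quadForm] at hq
      omega
    have hneg := hADE Y hY
    obtain ⟨k, hk⟩ := heven
    generalize hs : (Y 0) ^ 2 = s at hdiff hsq ⊢
    generalize hq1 : quadForm (n + 1) (treeM (n + 1) G wΓ) Y = qG at hq hdiff
    generalize hq2 : quadForm (n + 1) (treeM (n + 1) G w₀) Y = q0 at hdiff hneg hk ⊢
    rcases hc with rfl | rfl <;> omega
  refine ⟨hdiff, ?_, ?_, ?_⟩
  · rintro (h | h)
    · exact (main _ (Or.inl rfl) h).1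
    · exact (main _ (Or.inr rfl) h).1
  · intro h
    have h2 := (main _ (Or.inl rfl) h).2
    norm_num at h2
    exact h2
  · intro h
    have h2 := (main _ (Or.inr rfl) h).2
    norm_num at h2
    exact h2
end

section
/- For the Dynkin lattice of type Aₙ with simple roots E₁,…,Eₙ, any effective nonzero divisor Y = Σᵢ aᵢEᵢ satisfies (Y·Y) ≤ -aₙ² - 1. In particular (Y·Y) ≤ -2aₙ. -/
open Finset

/-- Intersection matrix of the Aₙ Dynkin lattice: `-2` on the diagonal, `1` for
consecutive indices, `0` otherwise. -/
def AnM (n : ℕ) (i j : Fin n) : ℤ :=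
  if i = j then -2
  else if i.val + 1 = j.val ∨ j.val + 1 = i.val then 1 else 0

def natM (i j : ℕ) : ℤ :=
  if i = j then -2
  else if i + 1 = j ∨ j + 1 = i then 1 else 0

lemma natM_key (f : ℕ → ℤ) : ∀ n, 1 ≤ n →
    ∑ i ∈ range n, ∑ j ∈ range n, f i * natM i j * f j
      = -(f 0)^2 - (f (n-1))^2 - ∑ k ∈ range (n-1), (f (k+1) - f k)^2 := by
  intro n hn
  induction n, hn using Nat.le_induction with
  | base => simp [natM]; ring
  | succ n hn ih =>
    obtain ⟨m, rfl⟩ : ∃ m, n = m + 1 := ⟨n - 1, by omega⟩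
    have hA : ∑ i ∈ range (m+1), f i * natM i (m+1) * f (m+1) = f m * f (m+1) := by
      rw [Finset.sum_range_succ]
      have h0 : ∑ i ∈ range m, f i * natM i (m+1) * f (m+1) = 0 := by
        apply Finset.sum_eq_zero
        intro i hi
        simp only [mem_range] at hi
        simp only [natM]
        rw [if_neg (by omega), if_neg (by omega)]
        ring
      have h1 : natM m (m+1) = 1 := by
        simp only [natM]; rw [if_neg (by omega)]; simp
      rw [h0, h1]; ring
    have hB : ∑ j ∈ range (m+1), f (m+1) * natM (m+1) j * f j = f (m+1) * f m := by
      rw [Finset.sum_range_succ]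
      have h0 : ∑ j ∈ range m, f (m+1) * natM (m+1) j * f j = 0 := by
        apply Finset.sum_eq_zero
        intro j hj
        simp only [mem_range] at hj
        simp only [natM]
        rw [if_neg (by omega), if_neg (by omega)]
        ring
      have h1 : natM (m+1) m = 1 := by
        simp only [natM]; rw [if_neg (by omega)]; simp
      rw [h0, h1]; ring
    have hD : natM (m+1) (m+1) = -2 := by simp [natM]
    rw [Finset.sum_range_succ]
    simp only [Finset.sum_range_succ (n := m+1)]
    rw [Finset.sum_add_distrib, hA, hB, hD]
    simp only [Nat.add_sub_cancel] at ih ⊢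
    rw [ih, Finset.sum_range_succ]
    ring
  
theorem stmt_5 (n : ℕ) (hn : 0 < n) (a : Fin n → ℤ)
    (ha : ∀ i, 0 ≤ a i) (hane : a ≠ 0) :
    (∑ i, ∑ j, a i * AnM n i j * a j) ≤ -(a ⟨n - 1, by omega⟩) ^ 2 - 1 ∧
    (∑ i, ∑ j, a i * AnM n i j * a j) ≤ -2 * a ⟨n - 1, by omega⟩ := by
  set f : ℕ → ℤ := fun k => if h : k < n then a ⟨k, h⟩ else 0 with hf
  have hS : (∑ i, ∑ j, a i * AnM n i j * a j)
      = ∑ i ∈ range n, ∑ j ∈ range n, f i * natM i j * f j := by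
    rw [Finset.sum_range]
    apply Finset.sum_congr rfl
    intro i _
    rw [Finset.sum_range]
    apply Finset.sum_congr rfl
    intro j _
    have hfi : f i.val = a i := by simp [hf]
    have hfj : f j.val = a j := by simp [hf]
    rw [hfi, hfj]
    congr 1
    congr 1
    simp [AnM, natM, Fin.ext_iff]
  have hkey := natM_key f n hn
  set Q : ℤ := ∑ k ∈ range (n-1), (f (k+1) - f k)^2 with hQ
  have hQ0 : 0 ≤ Q := Finset.sum_nonneg fun k _ => sq_nonneg _
  have hlast : f (n-1) = a ⟨n-1, by omega⟩ := by
    simp only [hf]; rw [dif_pos (by omega)]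
  have hpos : 1 ≤ (f 0)^2 + Q := by
    by_contra h
    push_neg at h
    have h0 : (f 0)^2 = 0 ∧ Q = 0 := by
      constructor <;> nlinarith [sq_nonneg (f 0)]
    have hterm : ∀ k ∈ range (n-1), (f (k+1) - f k)^2 = 0 := by
      rw [← Finset.sum_eq_zero_iff_of_nonneg (fun k _ => sq_nonneg _)]
      exact h0.2
    have hall : ∀ k, k < n → f k = 0 := by
      intro k
      induction k with
      | zero => intro _; exact pow_eq_zero_iff (n := 2) (by norm_num) |>.mp h0.1
      | succ k ihk =>
        intro hk
        have hk' : f (k+1) - f k = 0 := by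
          have := hterm k (by simp [mem_range]; omega)
          exact pow_eq_zero_iff (n := 2) (by norm_num) |>.mp this
        have := ihk (by omega)
        omega
    apply hane
    funext i
    have := hall i.val i.isLt
    simpa [hf] using this
  constructor
  · rw [hS, hkey, hlast]
    nlinarith
  · rw [hS, hkey, hlast]
    nlinarith [sq_nonneg (a ⟨n-1, by omega⟩ - 1)]
end

section
/- The number of roots in the triple root system R(A_{n,m,k}) equals n² + m² + k² + n + m + k + 2(n+1)(m+1)(k+1). -/
open Finset

/-- Vertices of the triple diagram `A_{n,m,k}`: the central weight-3 vertex `none`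
together with three chains of lengths `n`, `m`, `k`. -/
abbrev AnmkV (n m k : ℕ) := Option (Fin n ⊕ Fin m ⊕ Fin k)

/-- Adjacency of `A_{n,m,k}`: the central vertex is adjacent to the first vertex of
each chain, and consecutive vertices of each chain are adjacent. -/
def AnmkAdj (n m k : ℕ) : AnmkV n m k → AnmkV n m k → Bool
  | none, some (Sum.inl i) => decide (i.val = 0)
  | some (Sum.inl i), none => decide (i.val = 0)
  | none, some (Sum.inr (Sum.inl i)) => decide (i.val = 0)
  | some (Sum.inr (Sum.inl i)), none => decide (i.val = 0)
  | none, some (Sum.inr (Sum.inr i)) => decide (i.val = 0)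
  | some (Sum.inr (Sum.inr i)), none => decide (i.val = 0)
  | some (Sum.inl i), some (Sum.inl j) => decide (i.val + 1 = j.val ∨ j.val + 1 = i.val)
  | some (Sum.inr (Sum.inl i)), some (Sum.inr (Sum.inl j)) =>
      decide (i.val + 1 = j.val ∨ j.val + 1 = i.val)
  | some (Sum.inr (Sum.inr i)), some (Sum.inr (Sum.inr j)) =>
      decide (i.val + 1 = j.val ∨ j.val + 1 = i.val)
  | _, _ => false

/-- Intersection matrix of `A_{n,m,k}`: `-3` at the central vertex, `-2` at the
other vertices, `1` for adjacent pairs, `0` otherwise. -/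
def AnmkM (n m k : ℕ) (x y : AnmkV n m k) : ℤ :=
  if x = y then (if x = none then -3 else -2)
  else if AnmkAdj n m k x y then 1 else 0

/-- Self-intersection of a divisor on `A_{n,m,k}`. -/
def AnmkQ (n m k : ℕ) (Y : AnmkV n m k → ℤ) : ℤ :=
  ∑ x, ∑ y, Y x * AnmkM n m k x y * Y y


namespace Stmt6

/-- extension of a chain vector by zero -/
def ext (n : ℕ) (y : Fin n → ℤ) : ℕ → ℤ := fun i => if h : i < n then y ⟨i, h⟩ else 0

/-- extended sequence: center value at 0, then chain, then zeros -/
def eseq (n : ℕ) (c : ℤ) (y : Fin n → ℤ) : ℕ → ℤ :=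
  fun i => if i = 0 then c else ext n y (i - 1)

def dseq (n : ℕ) (c : ℤ) (y : Fin n → ℤ) : ℕ → ℤ :=
  fun i => eseq n c y i - eseq n c y (i + 1)

def chainS (n : ℕ) (c : ℤ) (y : Fin n → ℤ) : ℤ :=
  ∑ i ∈ range (n+1), (dseq n c y i)^2

lemma eseq_succ (n : ℕ) (c : ℤ) (y : Fin n → ℤ) (i : ℕ) :
    eseq n c y (i+1) = ext n y i := by simp [eseq]

lemma ext_ge (n : ℕ) (y : Fin n → ℤ) {i : ℕ} (h : n ≤ i) : ext n y i = 0 := by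
  simp [ext, Nat.not_lt.mpr h]

lemma eseq_zero_of (n : ℕ) (c : ℤ) (y : Fin n → ℤ) {i : ℕ} (h : n + 1 ≤ i) :
    eseq n c y i = 0 := by
  have h1 : i ≠ 0 := by omega
  simp [eseq, h1, ext_ge n y (by omega : n ≤ i - 1)]

lemma dseq_zero_of (n : ℕ) (c : ℤ) (y : Fin n → ℤ) {i : ℕ} (h : n + 1 ≤ i) :
    dseq n c y i = 0 := by
  simp [dseq, eseq_zero_of n c y h, eseq_zero_of n c y (by omega : n + 1 ≤ i + 1)]

lemma eseq_eq_sub (n : ℕ) (c : ℤ) (y : Fin n → ℤ) (j : ℕ) :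
    eseq n c y j = c - ∑ i ∈ range j, dseq n c y i := by
  have := Finset.sum_range_sub' (eseq n c y) j
  have h0 : eseq n c y 0 = c := by simp [eseq]
  unfold dseq
  omega

lemma sum_dseq (n : ℕ) (c : ℤ) (y : Fin n → ℤ) :
    ∑ i ∈ range (n+1), dseq n c y i = c := by
  have := eseq_eq_sub n c y (n+1)
  have h0 : eseq n c y (n+1) = 0 := eseq_zero_of n c y le_rfl
  omega

lemma chainS_nonneg (n : ℕ) (c : ℤ) (y : Fin n → ℤ) : 0 ≤ chainS n c y :=
  Finset.sum_nonneg fun i _ => sq_nonneg _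

lemma abs_le_sq (d : ℤ) : |d| ≤ d^2 := by
  rcases eq_or_ne d 0 with h | h
  · simp [h]
  · have h1 : 1 ≤ |d| := Int.one_le_abs h
    have h2 : d^2 = |d| * |d| := (abs_mul_abs_self d).symm ▸ (sq d)
    nlinarith

lemma chainS_ge_abs (n : ℕ) (c : ℤ) (y : Fin n → ℤ) : |c| ≤ chainS n c y := by
  calc |c| = |∑ i ∈ range (n+1), dseq n c y i| := by rw [sum_dseq]
    _ ≤ ∑ i ∈ range (n+1), |dseq n c y i| := Finset.abs_sum_le_sum_abs _ _
    _ ≤ ∑ i ∈ range (n+1), (dseq n c y i)^2 := Finset.sum_le_sum fun i _ => abs_le_sq _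
    _ = chainS n c y := rfl

lemma chainS_parity (n : ℕ) (c : ℤ) (y : Fin n → ℤ) : 2 ∣ chainS n c y - c := by
  have : chainS n c y - c =
      ∑ i ∈ range (n+1), ((dseq n c y i)^2 - dseq n c y i) := by
    rw [Finset.sum_sub_distrib, sum_dseq, chainS]
  rw [this]
  apply Finset.dvd_sum
  intro i _
  have : (dseq n c y i)^2 - dseq n c y i = (dseq n c y i) * (dseq n c y i - 1) := by ring
  rw [this]
  rcases Int.even_or_odd (dseq n c y i) with h | h
  · exact Dvd.dvd.mul_right h.two_dvd _
  · obtain ⟨r, hr⟩ := h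
    exact Dvd.dvd.mul_left ⟨r, by omega⟩ _



section Support
variable {M : ℕ} {g : ℕ → ℤ}

lemma sum_single_support {t : ℕ} (h : ∀ i, i ≠ t → g i = 0) (M : ℕ) :
    ∑ i ∈ range M, g i = if t < M then g t else 0 := by
  split_ifs with ht
  · exact Finset.sum_eq_single_of_mem t (mem_range.mpr ht) (fun b _ hb => h b hb)
  · exact Finset.sum_eq_zero fun i hi => h i (by simp at hi; omega)

lemma sum_double_support {p q : ℕ} (hpq : p ≠ q)
    (h : ∀ i, i ≠ p → i ≠ q → g i = 0) (M : ℕ) :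
    ∑ i ∈ range M, g i = (if p < M then g p else 0) + (if q < M then g q else 0) := by
  have : ∀ i ∈ range M, g i = (if i = p then g p else 0) + (if i = q then g q else 0) := by
    intro i _
    rcases eq_or_ne i p with rfl | h1
    · simp [if_neg (by omega : ¬ (i = q))]
    · rcases eq_or_ne i q with rfl | h2
      · simp [if_neg h1]
      · simp [if_neg h1, if_neg h2, h i h1 h2]
  rw [Finset.sum_congr rfl this, Finset.sum_add_distrib]
  simp [Finset.sum_ite_eq', mem_range]

/-- pointwise: squares equal abs, so entries in {-1,0,1} -/
lemma pointwise_small (hg0 : ∀ i, M ≤ i → g i = 0)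
    (heq : ∑ i ∈ range M, (g i)^2 = ∑ i ∈ range M, |g i|) :
    ∀ i, |g i| ≤ 1 := by
  have h0 : ∀ i ∈ range M, (g i)^2 - |g i| = 0 := by
    rw [← Finset.sum_eq_zero_iff_of_nonneg (fun i _ => by
      have := abs_le_sq (g i); omega)]
    rw [Finset.sum_sub_distrib]; omega
  intro i
  by_cases hi : i < M
  · have := h0 i (mem_range.mpr hi)
    have habs : |g i| * |g i| = (g i)^2 := by
      rw [abs_mul_abs_self]; ring
    nlinarith [abs_nonneg (g i)]
  · simp [hg0 i (by omega)]

lemma abs_sum_le (g : ℕ → ℤ) (M : ℕ) :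
    |∑ i ∈ range M, g i| ≤ ∑ i ∈ range M, |g i| := Finset.abs_sum_le_sum_abs _ _

lemma sum_abs_le_sum_sq (g : ℕ → ℤ) (M : ℕ) :
    ∑ i ∈ range M, |g i| ≤ ∑ i ∈ range M, (g i)^2 :=
  Finset.sum_le_sum fun i _ => abs_le_sq (g i)

lemma support_one {ε : ℤ} (hg0 : ∀ i, M ≤ i → g i = 0)
    (h2 : ∑ i ∈ range M, (g i)^2 = 1) (h1 : ∑ i ∈ range M, g i = ε)
    (hε : ε = 1 ∨ ε = -1) :
    ∃ t, t < M ∧ g t = ε ∧ ∀ i, i ≠ t → g i = 0 := by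
  have hab : |ε| = 1 := by rcases hε with rfl | rfl <;> norm_num
  have hup := sum_abs_le_sum_sq g M
  have hlo := abs_sum_le g M
  rw [h1, hab] at hlo
  have habs : ∑ i ∈ range M, |g i| = 1 := by omega
  -- find the support point
  have hex : ∃ t ∈ range M, g t ≠ 0 := by
    by_contra hc
    push_neg at hc
    have : ∑ i ∈ range M, (g i)^2 = 0 :=
      Finset.sum_eq_zero fun i hi => by rw [hc i hi]; ring
    omega
  obtain ⟨t, htm, htne⟩ := hex
  have h1t : 1 ≤ |g t| := Int.one_le_abs htne
  have hsplit : |g t| + ∑ i ∈ (range M).erase t, |g i| = ∑ i ∈ range M, |g i| :=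
    Finset.add_sum_erase (range M) (fun i => |g i|) htm
  have hrest_nonneg : 0 ≤ ∑ i ∈ (range M).erase t, |g i| :=
    Finset.sum_nonneg fun i _ => abs_nonneg _
  have hgt1 : |g t| = 1 := by omega
  have hrest : ∑ i ∈ (range M).erase t, |g i| = 0 := by omega
  have hz : ∀ i ∈ (range M).erase t, |g i| = 0 :=
    (Finset.sum_eq_zero_iff_of_nonneg (fun i _ => abs_nonneg _)).mp hrest
  have hzero : ∀ i, i ≠ t → g i = 0 := by
    intro i hi
    by_cases him : i < M
    · have h' := hz i (Finset.mem_erase.mpr ⟨hi, mem_range.mpr him⟩)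
      exact abs_eq_zero.mp h'
    · exact hg0 i (by omega)
  have : ∑ i ∈ range M, g i = g t := by
    rw [sum_single_support hzero M, if_pos (mem_range.mp htm)]
  exact ⟨t, mem_range.mp htm, by omega, hzero⟩

lemma support_two (hg0 : ∀ i, M ≤ i → g i = 0)
    (h2 : ∑ i ∈ range M, (g i)^2 = 2) (h1 : ∑ i ∈ range M, g i = 0) :
    ∃ p q, p ≠ q ∧ p < M ∧ q < M ∧ g p = 1 ∧ g q = -1 ∧
      ∀ i, i ≠ p → i ≠ q → g i = 0 := by
  have hup := sum_abs_le_sum_sq g M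
  have hlo := abs_sum_le g M
  rw [h1, abs_zero] at hlo
  -- parity of sum of abs
  have hpar : 2 ∣ ∑ i ∈ range M, |g i| := by
    have : ∑ i ∈ range M, |g i| = ∑ i ∈ range M, (|g i| - g i) + ∑ i ∈ range M, g i := by
      rw [← Finset.sum_add_distrib]
      exact Finset.sum_congr rfl fun i _ => by ring
    rw [this, h1, add_zero]
    apply Finset.dvd_sum
    intro i _
    rcases abs_cases (g i) with ⟨h, _⟩ | ⟨h, _⟩
    · rw [h]; simp
    · rw [h]; exact ⟨-(g i), by ring⟩
  have hpos : ∑ i ∈ range M, |g i| ≠ 0 := by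
    intro hc
    have hz := (Finset.sum_eq_zero_iff_of_nonneg (fun i _ => abs_nonneg (g i))).mp hc
    have : ∑ i ∈ range M, (g i)^2 = 0 :=
      Finset.sum_eq_zero fun i hi => by rw [abs_eq_zero.mp (hz i hi)]; ring
    omega
  have hnn : 0 ≤ ∑ i ∈ range M, |g i| :=
    Finset.sum_nonneg fun i _ => abs_nonneg _
  have habs : ∑ i ∈ range M, |g i| = 2 := by omega
  have hsmall := pointwise_small hg0 (by omega)
  -- first point
  have hex : ∃ t ∈ range M, g t ≠ 0 := by
    by_contra hc
    push_neg at hc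
    have : ∑ i ∈ range M, (g i)^2 = 0 :=
      Finset.sum_eq_zero fun i hi => by rw [hc i hi]; ring
    omega
  obtain ⟨p, hpm, hpne⟩ := hex
  have hgp : |g p| = 1 := by have := Int.one_le_abs hpne; have := hsmall p; omega
  have hsplit : |g p| + ∑ i ∈ (range M).erase p, |g i| = ∑ i ∈ range M, |g i| :=
    Finset.add_sum_erase (range M) (fun i => |g i|) hpm
  have hrest : ∑ i ∈ (range M).erase p, |g i| = 1 := by omega
  -- second point
  have hex2 : ∃ t ∈ (range M).erase p, g t ≠ 0 := by
    by_contra hc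
    push_neg at hc
    have : ∑ i ∈ (range M).erase p, |g i| = 0 :=
      Finset.sum_eq_zero fun i hi => by rw [hc i hi]; simp
    omega
  obtain ⟨q, hqm, hqne⟩ := hex2
  have hqp : q ≠ p := Finset.ne_of_mem_erase hqm
  have hgq : |g q| = 1 := by have := Int.one_le_abs hqne; have := hsmall q; omega
  have hsplit2 : |g q| + ∑ i ∈ ((range M).erase p).erase q, |g i|
      = ∑ i ∈ (range M).erase p, |g i| :=
    Finset.add_sum_erase ((range M).erase p) (fun i => |g i|) hqm
  have hrest2 : ∑ i ∈ ((range M).erase p).erase q, |g i| = 0 := by omega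
  have hz : ∀ i ∈ ((range M).erase p).erase q, |g i| = 0 :=
    (Finset.sum_eq_zero_iff_of_nonneg (fun i _ => abs_nonneg _)).mp hrest2
  have hzero : ∀ i, i ≠ p → i ≠ q → g i = 0 := by
    intro i hip hiq
    by_cases him : i < M
    · exact abs_eq_zero.mp
        (hz i (Finset.mem_erase.mpr ⟨hiq, Finset.mem_erase.mpr ⟨hip, mem_range.mpr him⟩⟩))
    · exact hg0 i (by omega)
  have hsum2 : g p + g q = 0 := by
    have := sum_double_support (Ne.symm hqp) hzero M
    rw [h1, if_pos (mem_range.mp hpm), if_pos (mem_range.mp (Finset.mem_of_mem_erase hqm))] at this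
    omega
  have hcases : g p = 1 ∨ g p = -1 := by
    rcases abs_cases (g p) with ⟨he, _⟩ | ⟨he, _⟩ <;> omega
  rcases hcases with h | h
  · exact ⟨p, q, Ne.symm hqp, mem_range.mp hpm, mem_range.mp (Finset.mem_of_mem_erase hqm),
      h, by omega, hzero⟩
  · refine ⟨q, p, hqp, mem_range.mp (Finset.mem_of_mem_erase hqm), mem_range.mp hpm,
      by omega, by omega, fun i h1 h2 => hzero i h2 h1⟩

end Support
/-- prefix divisor on a chain -/
def prefF (N : ℕ) (ε : ℤ) (t : Fin (N+1)) : Fin N → ℤ :=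
  fun j => if j.1 < t.1 then ε else 0

/-- interval divisor on a chain: `+1` on `[a,b)`, `-1` on `[b,a)` -/
def intF (N : ℕ) (a b : Fin (N+1)) : Fin N → ℤ :=
  fun j => if a.1 ≤ j.1 ∧ j.1 < b.1 then 1 else if b.1 ≤ j.1 ∧ j.1 < a.1 then -1 else 0

lemma eseq_prefF (N : ℕ) (ε : ℤ) (t : Fin (N+1)) (i : ℕ) :
    eseq N ε (prefF N ε t) i = if i ≤ t.1 then ε else 0 := by
  have ht := t.isLt
  simp only [eseq, ext, prefF]
  split_ifs <;> omega

lemma dseq_prefF (N : ℕ) (ε : ℤ) (t : Fin (N+1)) (i : ℕ) :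
    dseq N ε (prefF N ε t) i = if i = t.1 then ε else 0 := by
  rw [dseq, eseq_prefF, eseq_prefF]
  split_ifs <;> omega

lemma eseq_intF (N : ℕ) (a b : Fin (N+1)) (i : ℕ) :
    eseq N 0 (intF N a b) i
      = if a.1 < i ∧ i ≤ b.1 then 1 else if b.1 < i ∧ i ≤ a.1 then -1 else 0 := by
  have ha := a.isLt
  have hb := b.isLt
  simp only [eseq, ext, intF]
  split_ifs <;> omega

lemma dseq_intF (N : ℕ) (a b : Fin (N+1)) (hab : a.1 ≠ b.1) (i : ℕ) :
    dseq N 0 (intF N a b) i = if i = a.1 then -1 else if i = b.1 then 1 else 0 := by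
  rw [dseq, eseq_intF, eseq_intF]
  split_ifs <;> omega

lemma chainS_prefF (N : ℕ) (ε : ℤ) (hε : ε = 1 ∨ ε = -1) (t : Fin (N+1)) :
    chainS N ε (prefF N ε t) = 1 := by
  have : ∀ i ∈ range (N+1), (dseq N ε (prefF N ε t) i)^2
      = if i = t.1 then 1 else 0 := by
    intro i _
    rw [dseq_prefF]
    split_ifs
    · rcases hε with rfl | rfl <;> norm_num
    · ring
  rw [chainS, Finset.sum_congr rfl this, Finset.sum_ite_eq' (range (N+1)) t.1 (fun _ => (1:ℤ))]
  simp [Nat.lt_succ_iff, t.isLt.le]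
  omega

lemma chainS_intF (N : ℕ) (a b : Fin (N+1)) (hab : a.1 ≠ b.1) :
    chainS N 0 (intF N a b) = 2 := by
  have : ∀ i ∈ range (N+1), (dseq N 0 (intF N a b) i)^2
      = (if i = a.1 then 1 else 0) + (if i = b.1 then 1 else 0) := by
    intro i _
    rw [dseq_intF N a b hab]
    split_ifs <;> (first | ring1 | omega)
  rw [chainS, Finset.sum_congr rfl this, Finset.sum_add_distrib]
  simp only [Finset.sum_ite_eq', mem_range]
  have ha := a.isLt
  have hb := b.isLt
  rw [if_pos (by omega), if_pos (by omega)]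
  norm_num

lemma chainS_zeroF (N : ℕ) : chainS N 0 (fun _ => (0:ℤ)) = 0 := by
  have : ∀ i ∈ range (N+1), (dseq N 0 (fun _ => (0:ℤ)) i)^2 = 0 := by
    intro i _
    simp only [dseq, eseq, ext]
    split_ifs <;> ring
  rw [chainS, Finset.sum_congr rfl this, Finset.sum_const, smul_zero]

/-- reconstruction: value of the chain from dseq -/
lemma y_eq_of_dseq (N : ℕ) (c : ℤ) (y : Fin N → ℤ) (j : Fin N) :
    y j = c - ∑ i ∈ range (j.1+1), dseq N c y i := by
  have h := eseq_eq_sub N c y (j.1+1)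
  rw [eseq_succ] at h
  have : ext N y j.1 = y j := by simp [ext, j.isLt]
  omega

lemma chainS_eq_zero (N : ℕ) (c : ℤ) (y : Fin N → ℤ) (h : chainS N c y = 0) :
    c = 0 ∧ ∀ j, y j = 0 := by
  have hc : c = 0 := by
    have h1 := chainS_ge_abs N c y
    have h2 := abs_nonneg c
    have : |c| = 0 := by omega
    exact abs_eq_zero.mp this
  have hz : ∀ i ∈ range (N+1), (dseq N c y i)^2 = 0 :=
    (Finset.sum_eq_zero_iff_of_nonneg (fun i _ => sq_nonneg _)).mp h
  have hd : ∀ i, dseq N c y i = 0 := by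
    intro i
    by_cases hi : i < N + 1
    · exact pow_eq_zero_iff (by norm_num) |>.mp (hz i (mem_range.mpr hi))
    · exact dseq_zero_of N c y (by omega)
  refine ⟨hc, fun j => ?_⟩
  rw [y_eq_of_dseq N c y j, Finset.sum_eq_zero (fun i _ => hd i), hc, sub_zero]

lemma chainS_eq_one (N : ℕ) (c : ℤ) (y : Fin N → ℤ) (hc : c = 1 ∨ c = -1)
    (h : chainS N c y = 1) :
    ∃ t : Fin (N+1), y = prefF N c t := by
  have hsum := sum_dseq N c y
  obtain ⟨t, htN, htc, hzero⟩ := support_one (fun i hi => dseq_zero_of N c y hi) h hsum hc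
  refine ⟨⟨t, htN⟩, funext fun j => ?_⟩
  rw [y_eq_of_dseq N c y j, sum_single_support hzero (j.1+1)]
  simp only [prefF]
  split_ifs <;> omega

lemma chainS_eq_two (N : ℕ) (y : Fin N → ℤ) (h : chainS N 0 y = 2) :
    ∃ a b : Fin (N+1), a.1 ≠ b.1 ∧ y = intF N a b := by
  have hsum := sum_dseq N 0 y
  obtain ⟨p, q, hpq, hpN, hqN, hp1, hq1, hzero⟩ :=
    support_two (fun i hi => dseq_zero_of N 0 y hi) h hsum
  refine ⟨⟨q, hqN⟩, ⟨p, hpN⟩, by simpa using Ne.symm hpq, funext fun j => ?_⟩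
  rw [y_eq_of_dseq N 0 y j, sum_double_support hpq hzero (j.1+1)]
  simp only [intF]
  split_ifs <;> omega


lemma ext_val (N : ℕ) (y : Fin N → ℤ) (j : Fin N) : ext N y j.1 = y j := by
  simp [ext, j.isLt]

lemma chainS_formula (N : ℕ) (c : ℤ) (y : Fin N → ℤ) :
    chainS N c y = c^2 - 2*(c * ext N y 0) + 2*∑ i ∈ range N, (ext N y i)^2
      - 2*∑ i ∈ range N, ext N y i * ext N y (i+1) := by
  have h0 : dseq N c y 0 = c - ext N y 0 := by
    rw [dseq, eseq_succ]
    simp [eseq]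
  have hsq : ∑ i ∈ range (N+1), (dseq N c y i)^2
      = ∑ i ∈ range N, (dseq N c y (i+1))^2 + (dseq N c y 0)^2 :=
    Finset.sum_range_succ' _ N
  have hexp : ∑ i ∈ range N, (dseq N c y (i+1))^2
      = ∑ i ∈ range N, (ext N y i)^2 - 2*∑ i ∈ range N, (ext N y i * ext N y (i+1))
        + ∑ i ∈ range N, (ext N y (i+1))^2 := by
    have hpt : ∀ i ∈ range N, (dseq N c y (i+1))^2
        = (ext N y i)^2 - 2*(ext N y i * ext N y (i+1)) + (ext N y (i+1))^2 := by
      intro i _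
      rw [dseq, eseq_succ, eseq_succ]; ring
    rw [Finset.sum_congr rfl hpt, Finset.sum_add_distrib, Finset.sum_sub_distrib,
      Finset.mul_sum]
  have hshift : ∑ i ∈ range N, (ext N y (i+1))^2 + (ext N y 0)^2
      = ∑ i ∈ range N, (ext N y i)^2 := by
    have h1 := Finset.sum_range_succ (fun i => (ext N y i)^2) N
    have h2 := Finset.sum_range_succ' (fun i => (ext N y i)^2) N
    have h3 : ext N y N = 0 := ext_ge N y le_rfl
    rw [h3] at h1
    norm_num at h1
    linarith
  have hc : (dseq N c y 0)^2 = c^2 - 2*(c*ext N y 0) + (ext N y 0)^2 := by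
    rw [h0]; ring
  rw [chainS, hsq, hexp, hc]
  linarith

lemma sum_center_l (N : ℕ) (c : ℤ) (y : Fin N → ℤ) :
    ∑ i : Fin N, c * (if i.1 = 0 then (1:ℤ) else 0) * y i = c * ext N y 0 := by
  have hpt : ∀ i : Fin N, c * (if i.1 = 0 then (1:ℤ) else 0) * y i
      = (fun t => if t = 0 then c * ext N y t else 0) i.1 := by
    intro i
    simp only []
    split_ifs with h
    · rw [← ext_val N y i, h]; ring
    · ring
  rw [Finset.sum_congr rfl (fun i _ => hpt i),
    Fin.sum_univ_eq_sum_range (fun t => if t = 0 then c * ext N y t else 0) N,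
    Finset.sum_ite_eq' (range N) 0 (fun t => c * ext N y t)]
  rcases N with _ | N'
  · simp [ext]
  · simp

lemma sum_center_r (N : ℕ) (c : ℤ) (y : Fin N → ℤ) :
    ∑ i : Fin N, y i * (if i.1 = 0 then (1:ℤ) else 0) * c = c * ext N y 0 := by
  rw [← sum_center_l N c y]
  exact Finset.sum_congr rfl fun i _ => by ring

lemma sum_adj_up (N : ℕ) (y : Fin N → ℤ) :
    ∑ i : Fin N, ∑ j : Fin N, (if i.1 + 1 = j.1 then y i * y j else 0)
      = ∑ i ∈ range N, ext N y i * ext N y (i+1) := by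
  have hin : ∀ i : Fin N, ∑ j : Fin N, (if i.1 + 1 = j.1 then y i * y j else 0)
      = ext N y i.1 * ext N y (i.1+1) := by
    intro i
    have hpt : ∀ j : Fin N, (if i.1 + 1 = j.1 then y i * y j else 0)
        = (fun t => if i.1 + 1 = t then ext N y i.1 * ext N y t else 0) j.1 := by
      intro j
      simp only []
      split_ifs with h
      · rw [ext_val, ext_val]
      · rfl
    rw [Finset.sum_congr rfl (fun j _ => hpt j),
      Fin.sum_univ_eq_sum_range (fun t => if i.1 + 1 = t then ext N y i.1 * ext N y t else 0) N,
      Finset.sum_ite_eq (range N) (i.1+1) (fun t => ext N y i.1 * ext N y t)]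
    by_cases h : i.1 + 1 < N
    · rw [if_pos (mem_range.mpr h)]
    · rw [if_neg (by simpa using h), ext_ge N y (by omega : N ≤ i.1 + 1), mul_zero]
  rw [Finset.sum_congr rfl (fun i _ => hin i)]
  exact Fin.sum_univ_eq_sum_range (fun t => ext N y t * ext N y (t+1)) N

lemma sum_adj_down (N : ℕ) (y : Fin N → ℤ) :
    ∑ i : Fin N, ∑ j : Fin N, (if j.1 + 1 = i.1 then y i * y j else 0)
      = ∑ i ∈ range N, ext N y i * ext N y (i+1) := by
  rw [Finset.sum_comm, ← sum_adj_up N y]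
  exact Finset.sum_congr rfl fun j _ => Finset.sum_congr rfl fun i _ => by
    split_ifs <;> ring

lemma sum_diag (N : ℕ) (y : Fin N → ℤ) :
    ∑ i : Fin N, ∑ j : Fin N, (if i = j then -2 * (y i * y j) else 0)
      = -2 * ∑ i ∈ range N, (ext N y i)^2 := by
  have hin : ∀ i : Fin N, ∑ j : Fin N, (if i = j then -2 * (y i * y j) else 0)
      = -2 * (y i)^2 := by
    intro i
    rw [Finset.sum_ite_eq Finset.univ i (fun j => -2 * (y i * y j)), if_pos (mem_univ i)]
    ring
  rw [Finset.sum_congr rfl (fun i _ => hin i), ← Finset.mul_sum]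
  congr 1
  have hpt : ∀ i : Fin N, (y i)^2 = (fun t => (ext N y t)^2) i.1 := by
    intro i
    simp only []
    rw [ext_val]
  rw [Finset.sum_congr rfl (fun i _ => hpt i)]
  exact Fin.sum_univ_eq_sum_range (fun t => (ext N y t)^2) N

lemma sum_chain_block (N : ℕ) (y : Fin N → ℤ) :
    ∑ i : Fin N, ∑ j : Fin N,
      y i * (if i = j then (-2:ℤ) else if i.1 + 1 = j.1 ∨ j.1 + 1 = i.1 then 1 else 0) * y j
      = -2 * ∑ i ∈ range N, (ext N y i)^2 + 2 * ∑ i ∈ range N, ext N y i * ext N y (i+1) := by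
  have key : ∀ i j : Fin N,
      y i * (if i = j then (-2:ℤ) else if i.1 + 1 = j.1 ∨ j.1 + 1 = i.1 then 1 else 0) * y j
      = (if i = j then -2 * (y i * y j) else 0)
        + ((if i.1 + 1 = j.1 then y i * y j else 0) + (if j.1 + 1 = i.1 then y i * y j else 0)) := by
    intro i j
    by_cases h1 : i = j
    · subst h1
      have h4 : ¬ ((i:ℕ) + 1 = (i:ℕ)) := by omega
      simp [h4]
      ring
    · rw [if_neg h1, if_neg h1]
      by_cases h2 : i.1 + 1 = j.1
      · rw [if_pos (Or.inl h2), if_pos h2, if_neg (by omega : ¬ (j.1 + 1 = i.1))]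
        ring
      · by_cases h3 : j.1 + 1 = i.1
        · rw [if_pos (Or.inr h3), if_neg h2, if_pos h3]
          ring
        · rw [if_neg (by tauto), if_neg h2, if_neg h3]
          ring
  rw [Finset.sum_congr rfl (fun i _ => Finset.sum_congr rfl (fun j _ => key i j))]
  simp only [Finset.sum_add_distrib]
  rw [sum_diag, sum_adj_up, sum_adj_down]
  ring



section Qeq
variable {n m k : ℕ}

lemma M_none_none : AnmkM n m k none none = -3 := by simp [AnmkM]

lemma M_none_1 (i : Fin n) :
    AnmkM n m k none (some (Sum.inl i)) = if i.1 = 0 then 1 else 0 := by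
  simp [AnmkM, AnmkAdj]

lemma M_1_none (i : Fin n) :
    AnmkM n m k (some (Sum.inl i)) none = if i.1 = 0 then 1 else 0 := by
  simp [AnmkM, AnmkAdj]

lemma M_none_2 (i : Fin m) :
    AnmkM n m k none (some (Sum.inr (Sum.inl i))) = if i.1 = 0 then 1 else 0 := by
  simp [AnmkM, AnmkAdj]

lemma M_2_none (i : Fin m) :
    AnmkM n m k (some (Sum.inr (Sum.inl i))) none = if i.1 = 0 then 1 else 0 := by
  simp [AnmkM, AnmkAdj]

lemma M_none_3 (i : Fin k) :
    AnmkM n m k none (some (Sum.inr (Sum.inr i))) = if i.1 = 0 then 1 else 0 := by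
  simp [AnmkM, AnmkAdj]

lemma M_3_none (i : Fin k) :
    AnmkM n m k (some (Sum.inr (Sum.inr i))) none = if i.1 = 0 then 1 else 0 := by
  simp [AnmkM, AnmkAdj]

lemma M_1_1 (i j : Fin n) :
    AnmkM n m k (some (Sum.inl i)) (some (Sum.inl j))
      = if i = j then -2 else if i.1 + 1 = j.1 ∨ j.1 + 1 = i.1 then 1 else 0 := by
  rcases eq_or_ne i j with rfl | h
  · simp [AnmkM]
  · simp [AnmkM, AnmkAdj, h]

lemma M_2_2 (i j : Fin m) :
    AnmkM n m k (some (Sum.inr (Sum.inl i))) (some (Sum.inr (Sum.inl j)))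
      = if i = j then -2 else if i.1 + 1 = j.1 ∨ j.1 + 1 = i.1 then 1 else 0 := by
  rcases eq_or_ne i j with rfl | h
  · simp [AnmkM]
  · simp [AnmkM, AnmkAdj, h]

lemma M_3_3 (i j : Fin k) :
    AnmkM n m k (some (Sum.inr (Sum.inr i))) (some (Sum.inr (Sum.inr j)))
      = if i = j then -2 else if i.1 + 1 = j.1 ∨ j.1 + 1 = i.1 then 1 else 0 := by
  rcases eq_or_ne i j with rfl | h
  · simp [AnmkM]
  · simp [AnmkM, AnmkAdj, h]

lemma M_1_2 (i : Fin n) (j : Fin m) :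
    AnmkM n m k (some (Sum.inl i)) (some (Sum.inr (Sum.inl j))) = 0 := by
  simp [AnmkM, AnmkAdj]

lemma M_1_3 (i : Fin n) (j : Fin k) :
    AnmkM n m k (some (Sum.inl i)) (some (Sum.inr (Sum.inr j))) = 0 := by
  simp [AnmkM, AnmkAdj]

lemma M_2_1 (i : Fin m) (j : Fin n) :
    AnmkM n m k (some (Sum.inr (Sum.inl i))) (some (Sum.inl j)) = 0 := by
  simp [AnmkM, AnmkAdj]

lemma M_2_3 (i : Fin m) (j : Fin k) :
    AnmkM n m k (some (Sum.inr (Sum.inl i))) (some (Sum.inr (Sum.inr j))) = 0 := by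
  simp [AnmkM, AnmkAdj]

lemma M_3_1 (i : Fin k) (j : Fin n) :
    AnmkM n m k (some (Sum.inr (Sum.inr i))) (some (Sum.inl j)) = 0 := by
  simp [AnmkM, AnmkAdj]

lemma M_3_2 (i : Fin k) (j : Fin m) :
    AnmkM n m k (some (Sum.inr (Sum.inr i))) (some (Sum.inr (Sum.inl j))) = 0 := by
  simp [AnmkM, AnmkAdj]

lemma Q_eq (Y : AnmkV n m k → ℤ) :
    AnmkQ n m k Y = -(chainS n (Y none) (fun i => Y (some (Sum.inl i)))
      + chainS m (Y none) (fun i => Y (some (Sum.inr (Sum.inl i))))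
      + chainS k (Y none) (fun i => Y (some (Sum.inr (Sum.inr i))))) := by
  rw [AnmkQ]
  simp only [Fintype.sum_option, Fintype.sum_sum_type,
    M_none_none, M_none_1, M_1_none, M_none_2, M_2_none, M_none_3, M_3_none,
    M_1_1, M_2_2, M_3_3, M_1_2, M_1_3, M_2_1, M_2_3, M_3_1, M_3_2,
    mul_zero, zero_mul, Finset.sum_const_zero, add_zero, zero_add, Finset.sum_add_distrib]
  rw [sum_center_l n (Y none) (fun i => Y (some (Sum.inl i))),
    sum_center_l m (Y none) (fun i => Y (some (Sum.inr (Sum.inl i)))),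
    sum_center_l k (Y none) (fun i => Y (some (Sum.inr (Sum.inr i)))),
    sum_center_r n (Y none) (fun i => Y (some (Sum.inl i))),
    sum_center_r m (Y none) (fun i => Y (some (Sum.inr (Sum.inl i)))),
    sum_center_r k (Y none) (fun i => Y (some (Sum.inr (Sum.inr i)))),
    sum_chain_block n (fun i => Y (some (Sum.inl i))),
    sum_chain_block m (fun i => Y (some (Sum.inr (Sum.inl i)))),
    sum_chain_block k (fun i => Y (some (Sum.inr (Sum.inr i)))),
    chainS_formula n (Y none) (fun i => Y (some (Sum.inl i))),
    chainS_formula m (Y none) (fun i => Y (some (Sum.inr (Sum.inl i)))),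
    chainS_formula k (Y none) (fun i => Y (some (Sum.inr (Sum.inr i))))]
  ring

end Qeq

section Parametrization
variable (n m k : ℕ)

def preY (ε : ℤ) (t₁ : Fin (n+1)) (t₂ : Fin (m+1)) (t₃ : Fin (k+1)) : AnmkV n m k → ℤ
  | none => ε
  | some (Sum.inl j) => prefF n ε t₁ j
  | some (Sum.inr (Sum.inl j)) => prefF m ε t₂ j
  | some (Sum.inr (Sum.inr j)) => prefF k ε t₃ j

def intY1 (a b : Fin (n+1)) : AnmkV n m k → ℤ
  | some (Sum.inl j) => intF n a b j
  | _ => 0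

def intY2 (a b : Fin (m+1)) : AnmkV n m k → ℤ
  | some (Sum.inr (Sum.inl j)) => intF m a b j
  | _ => 0

def intY3 (a b : Fin (k+1)) : AnmkV n m k → ℤ
  | some (Sum.inr (Sum.inr j)) => intF k a b j
  | _ => 0

def NE2 (N : ℕ) := {p : Fin (N+1) × Fin (N+1) // p.1 ≠ p.2}

def Param := (NE2 n ⊕ NE2 m ⊕ NE2 k) ⊕ (Bool × Fin (n+1) × Fin (m+1) × Fin (k+1))

def sgn (b : Bool) : ℤ := if b then 1 else -1

lemma sgn_cases (b : Bool) : sgn b = 1 ∨ sgn b = -1 := by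
  cases b <;> simp [sgn]

lemma sgn_ne_zero (b : Bool) : sgn b ≠ 0 := by
  rcases sgn_cases b with h | h <;> omega

def fmap : Param n m k → (AnmkV n m k → ℤ)
  | Sum.inl (Sum.inl p) => intY1 n m k p.1.1 p.1.2
  | Sum.inl (Sum.inr (Sum.inl p)) => intY2 n m k p.1.1 p.1.2
  | Sum.inl (Sum.inr (Sum.inr p)) => intY3 n m k p.1.1 p.1.2
  | Sum.inr q => preY n m k (sgn q.1) q.2.1 q.2.2.1 q.2.2.2

end Parametrization

section Forward
variable {n m k : ℕ}

lemma intF_sign_pos {N : ℕ} {a b : Fin (N+1)} (h : a.1 < b.1) (j : Fin N) :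
    0 ≤ intF N a b j := by
  rw [intF]
  split_ifs <;> omega

lemma intF_sign_neg {N : ℕ} {a b : Fin (N+1)} (h : b.1 < a.1) (j : Fin N) :
    intF N a b j ≤ 0 := by
  rw [intF]
  split_ifs <;> omega

lemma intF_ne {N : ℕ} (a b : Fin (N+1)) (hab : a.1 ≠ b.1) :
    ∃ j : Fin N, intF N a b j ≠ 0 := by
  have ha := a.isLt
  have hb := b.isLt
  have hmin : min a.1 b.1 < N := by omega
  refine ⟨⟨min a.1 b.1, hmin⟩, ?_⟩
  have hv : ((⟨min a.1 b.1, hmin⟩ : Fin N) : ℕ) = min a.1 b.1 := rfl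
  rw [intF]
  split_ifs <;> omega

/-- chain components of intY1 -/
lemma intY1_c1 (a b : Fin (n+1)) :
    (fun i => intY1 n m k a b (some (Sum.inl i))) = intF n a b := rfl
lemma intY1_c2 (a b : Fin (n+1)) :
    (fun i : Fin m => intY1 n m k a b (some (Sum.inr (Sum.inl i)))) = fun _ => (0:ℤ) := rfl
lemma intY1_c3 (a b : Fin (n+1)) :
    (fun i : Fin k => intY1 n m k a b (some (Sum.inr (Sum.inr i)))) = fun _ => (0:ℤ) := rfl
lemma intY2_c1 (a b : Fin (m+1)) :
    (fun i : Fin n => intY2 n m k a b (some (Sum.inl i))) = fun _ => (0:ℤ) := rfl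
lemma intY2_c2 (a b : Fin (m+1)) :
    (fun i => intY2 n m k a b (some (Sum.inr (Sum.inl i)))) = intF m a b := rfl
lemma intY2_c3 (a b : Fin (m+1)) :
    (fun i : Fin k => intY2 n m k a b (some (Sum.inr (Sum.inr i)))) = fun _ => (0:ℤ) := rfl
lemma intY3_c1 (a b : Fin (k+1)) :
    (fun i : Fin n => intY3 n m k a b (some (Sum.inl i))) = fun _ => (0:ℤ) := rfl
lemma intY3_c2 (a b : Fin (k+1)) :
    (fun i : Fin m => intY3 n m k a b (some (Sum.inr (Sum.inl i)))) = fun _ => (0:ℤ) := rfl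
lemma intY3_c3 (a b : Fin (k+1)) :
    (fun i => intY3 n m k a b (some (Sum.inr (Sum.inr i)))) = intF k a b := rfl

lemma preY_c1 (ε : ℤ) (t₁ : Fin (n+1)) (t₂ : Fin (m+1)) (t₃ : Fin (k+1)) :
    (fun i => preY n m k ε t₁ t₂ t₃ (some (Sum.inl i))) = prefF n ε t₁ := rfl
lemma preY_c2 (ε : ℤ) (t₁ : Fin (n+1)) (t₂ : Fin (m+1)) (t₃ : Fin (k+1)) :
    (fun i => preY n m k ε t₁ t₂ t₃ (some (Sum.inr (Sum.inl i)))) = prefF m ε t₂ := rfl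
lemma preY_c3 (ε : ℤ) (t₁ : Fin (n+1)) (t₂ : Fin (m+1)) (t₃ : Fin (k+1)) :
    (fun i => preY n m k ε t₁ t₂ t₃ (some (Sum.inr (Sum.inr i)))) = prefF k ε t₃ := rfl

lemma Q_intY1 (a b : Fin (n+1)) (hab : a.1 ≠ b.1) :
    AnmkQ n m k (intY1 n m k a b) = -2 := by
  rw [Q_eq, intY1_c1, intY1_c2, intY1_c3]
  have h0 : intY1 n m k a b none = 0 := rfl
  rw [h0, chainS_intF n a b hab, chainS_zeroF, chainS_zeroF]
  norm_num

lemma Q_intY2 (a b : Fin (m+1)) (hab : a.1 ≠ b.1) :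
    AnmkQ n m k (intY2 n m k a b) = -2 := by
  rw [Q_eq, intY2_c1, intY2_c2, intY2_c3]
  have h0 : intY2 n m k a b none = 0 := rfl
  rw [h0, chainS_intF m a b hab, chainS_zeroF, chainS_zeroF]
  norm_num

lemma Q_intY3 (a b : Fin (k+1)) (hab : a.1 ≠ b.1) :
    AnmkQ n m k (intY3 n m k a b) = -2 := by
  rw [Q_eq, intY3_c1, intY3_c2, intY3_c3]
  have h0 : intY3 n m k a b none = 0 := rfl
  rw [h0, chainS_intF k a b hab, chainS_zeroF, chainS_zeroF]
  norm_num

lemma Q_preY (ε : ℤ) (hε : ε = 1 ∨ ε = -1) (t₁ : Fin (n+1)) (t₂ : Fin (m+1)) (t₃ : Fin (k+1)) :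
    AnmkQ n m k (preY n m k ε t₁ t₂ t₃) = -3 := by
  rw [Q_eq, preY_c1, preY_c2, preY_c3]
  have h0 : preY n m k ε t₁ t₂ t₃ none = ε := rfl
  rw [h0, chainS_prefF n ε hε t₁, chainS_prefF m ε hε t₂, chainS_prefF k ε hε t₃]
  norm_num

end Forward

section Main
variable {n m k : ℕ}

lemma fmap_mem (p : Param n m k) :
    fmap n m k p ≠ 0 ∧ ((∀ i, 0 ≤ fmap n m k p i) ∨ (∀ i, fmap n m k p i ≤ 0)) ∧
      (AnmkQ n m k (fmap n m k p) = -2 ∨ AnmkQ n m k (fmap n m k p) = -3) := by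
  rcases p with ((⟨⟨a, b⟩, hab⟩ | ⟨⟨a, b⟩, hab⟩ | ⟨⟨a, b⟩, hab⟩) | ⟨s, t₁, t₂, t₃⟩)
  · have hab' : a.1 ≠ b.1 := fun h => hab (Fin.val_injective h)
    refine ⟨?_, ?_, Or.inl (Q_intY1 a b hab')⟩
    · obtain ⟨j, hj⟩ := intF_ne a b hab'
      intro h0
      exact hj (congrFun h0 (some (Sum.inl j)))
    · rcases hab'.lt_or_gt with h | h
      · left; intro x
        rcases x with _ | (j | j | j)
        · exact le_refl 0
        · exact intF_sign_pos h j
        · exact le_refl 0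
        · exact le_refl 0
      · right; intro x
        rcases x with _ | (j | j | j)
        · exact le_refl 0
        · exact intF_sign_neg h j
        · exact le_refl 0
        · exact le_refl 0
  · have hab' : a.1 ≠ b.1 := fun h => hab (Fin.val_injective h)
    refine ⟨?_, ?_, Or.inl (Q_intY2 a b hab')⟩
    · obtain ⟨j, hj⟩ := intF_ne a b hab'
      intro h0
      exact hj (congrFun h0 (some (Sum.inr (Sum.inl j))))
    · rcases hab'.lt_or_gt with h | h
      · left; intro x
        rcases x with _ | (j | j | j)
        · exact le_refl 0
        · exact le_refl 0
        · exact intF_sign_pos h j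
        · exact le_refl 0
      · right; intro x
        rcases x with _ | (j | j | j)
        · exact le_refl 0
        · exact le_refl 0
        · exact intF_sign_neg h j
        · exact le_refl 0
  · have hab' : a.1 ≠ b.1 := fun h => hab (Fin.val_injective h)
    refine ⟨?_, ?_, Or.inl (Q_intY3 a b hab')⟩
    · obtain ⟨j, hj⟩ := intF_ne a b hab'
      intro h0
      exact hj (congrFun h0 (some (Sum.inr (Sum.inr j))))
    · rcases hab'.lt_or_gt with h | h
      · left; intro x
        rcases x with _ | (j | j | j)
        · exact le_refl 0
        · exact le_refl 0
        · exact le_refl 0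
        · exact intF_sign_pos h j
      · right; intro x
        rcases x with _ | (j | j | j)
        · exact le_refl 0
        · exact le_refl 0
        · exact le_refl 0
        · exact intF_sign_neg h j
  · refine ⟨?_, ?_, Or.inr (Q_preY (sgn s) (sgn_cases s) t₁ t₂ t₃)⟩
    · intro h0
      exact sgn_ne_zero s (congrFun h0 none)
    · rcases sgn_cases s with h | h
      · left; intro x
        rcases x with _ | (j | j | j)
        · show (0:ℤ) ≤ sgn s; omega
        · show (0:ℤ) ≤ prefF n (sgn s) t₁ j
          rw [prefF]; split_ifs <;> omega
        · show (0:ℤ) ≤ prefF m (sgn s) t₂ j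
          rw [prefF]; split_ifs <;> omega
        · show (0:ℤ) ≤ prefF k (sgn s) t₃ j
          rw [prefF]; split_ifs <;> omega
      · right; intro x
        rcases x with _ | (j | j | j)
        · show sgn s ≤ (0:ℤ); omega
        · show prefF n (sgn s) t₁ j ≤ (0:ℤ)
          rw [prefF]; split_ifs <;> omega
        · show prefF m (sgn s) t₂ j ≤ (0:ℤ)
          rw [prefF]; split_ifs <;> omega
        · show prefF k (sgn s) t₃ j ≤ (0:ℤ)
          rw [prefF]; split_ifs <;> omega

lemma mem_fmap_range (Y : AnmkV n m k → ℤ)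
    (hQ : AnmkQ n m k Y = -2 ∨ AnmkQ n m k Y = -3) :
    ∃ p : Param n m k, fmap n m k p = Y := by
  rw [Q_eq] at hQ
  have hsum : chainS n (Y none) (fun i => Y (some (Sum.inl i)))
      + chainS m (Y none) (fun i => Y (some (Sum.inr (Sum.inl i))))
      + chainS k (Y none) (fun i => Y (some (Sum.inr (Sum.inr i)))) = 2
      ∨ chainS n (Y none) (fun i => Y (some (Sum.inl i)))
      + chainS m (Y none) (fun i => Y (some (Sum.inr (Sum.inl i))))
      + chainS k (Y none) (fun i => Y (some (Sum.inr (Sum.inr i)))) = 3 := by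
    rcases hQ with h | h
    · exact Or.inl (by omega)
    · exact Or.inr (by omega)
  have hn1 := chainS_nonneg n (Y none) (fun i => Y (some (Sum.inl i)))
  have hn2 := chainS_nonneg m (Y none) (fun i => Y (some (Sum.inr (Sum.inl i))))
  have hn3 := chainS_nonneg k (Y none) (fun i => Y (some (Sum.inr (Sum.inr i))))
  by_cases hc : Y none = 0
  · obtain ⟨u1, hu1⟩ := chainS_parity n (Y none) (fun i => Y (some (Sum.inl i)))
    obtain ⟨u2, hu2⟩ := chainS_parity m (Y none) (fun i => Y (some (Sum.inr (Sum.inl i))))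
    obtain ⟨u3, hu3⟩ := chainS_parity k (Y none) (fun i => Y (some (Sum.inr (Sum.inr i))))
    have hcase : (chainS n (Y none) (fun i => Y (some (Sum.inl i))) = 2
        ∧ chainS m (Y none) (fun i => Y (some (Sum.inr (Sum.inl i)))) = 0
        ∧ chainS k (Y none) (fun i => Y (some (Sum.inr (Sum.inr i)))) = 0)
      ∨ (chainS m (Y none) (fun i => Y (some (Sum.inr (Sum.inl i)))) = 2
        ∧ chainS n (Y none) (fun i => Y (some (Sum.inl i))) = 0
        ∧ chainS k (Y none) (fun i => Y (some (Sum.inr (Sum.inr i)))) = 0)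
      ∨ (chainS k (Y none) (fun i => Y (some (Sum.inr (Sum.inr i)))) = 2
        ∧ chainS n (Y none) (fun i => Y (some (Sum.inl i))) = 0
        ∧ chainS m (Y none) (fun i => Y (some (Sum.inr (Sum.inl i)))) = 0) := by
      rcases hsum with h | h <;> omega
    rw [hc] at hcase
    rcases hcase with ⟨ha, hb, hz⟩ | ⟨ha, hb, hz⟩ | ⟨ha, hb, hz⟩
    · obtain ⟨a, b, hab, hy⟩ := chainS_eq_two n _ ha
      obtain ⟨-, hz2⟩ := chainS_eq_zero m 0 _ hb
      obtain ⟨-, hz3⟩ := chainS_eq_zero k 0 _ hz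
      refine ⟨Sum.inl (Sum.inl ⟨(a, b), fun h => hab (congrArg Fin.val h)⟩),
        funext fun x => ?_⟩
      rcases x with _ | (j | j | j)
      · exact hc.symm
      · exact (congrFun hy j).symm
      · exact (hz2 j).symm
      · exact (hz3 j).symm
    · obtain ⟨a, b, hab, hy⟩ := chainS_eq_two m _ ha
      obtain ⟨-, hz2⟩ := chainS_eq_zero n 0 _ hb
      obtain ⟨-, hz3⟩ := chainS_eq_zero k 0 _ hz
      refine ⟨Sum.inl (Sum.inr (Sum.inl ⟨(a, b), fun h => hab (congrArg Fin.val h)⟩)),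
        funext fun x => ?_⟩
      rcases x with _ | (j | j | j)
      · exact hc.symm
      · exact (hz2 j).symm
      · exact (congrFun hy j).symm
      · exact (hz3 j).symm
    · obtain ⟨a, b, hab, hy⟩ := chainS_eq_two k _ ha
      obtain ⟨-, hz2⟩ := chainS_eq_zero n 0 _ hb
      obtain ⟨-, hz3⟩ := chainS_eq_zero m 0 _ hz
      refine ⟨Sum.inl (Sum.inr (Sum.inr ⟨(a, b), fun h => hab (congrArg Fin.val h)⟩)),
        funext fun x => ?_⟩
      rcases x with _ | (j | j | j)
      · exact hc.symm
      · exact (hz2 j).symm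
      · exact (hz3 j).symm
      · exact (congrFun hy j).symm
  · have habs : 1 ≤ |Y none| := Int.one_le_abs hc
    have hg1 := chainS_ge_abs n (Y none) (fun i => Y (some (Sum.inl i)))
    have hg2 := chainS_ge_abs m (Y none) (fun i => Y (some (Sum.inr (Sum.inl i))))
    have hg3 := chainS_ge_abs k (Y none) (fun i => Y (some (Sum.inr (Sum.inr i))))
    have hS : chainS n (Y none) (fun i => Y (some (Sum.inl i))) = 1
        ∧ chainS m (Y none) (fun i => Y (some (Sum.inr (Sum.inl i)))) = 1
        ∧ chainS k (Y none) (fun i => Y (some (Sum.inr (Sum.inr i)))) = 1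
        ∧ |Y none| = 1 := by
      rcases hsum with h | h <;> omega
    have hc1 : Y none = 1 ∨ Y none = -1 := by
      rcases abs_cases (Y none) with ⟨he, _⟩ | ⟨he, _⟩ <;> omega
    obtain ⟨t₁, ht1⟩ := chainS_eq_one n (Y none) _ hc1 hS.1
    obtain ⟨t₂, ht2⟩ := chainS_eq_one m (Y none) _ hc1 hS.2.1
    obtain ⟨t₃, ht3⟩ := chainS_eq_one k (Y none) _ hc1 hS.2.2.1
    rcases hc1 with h1 | h1
    · refine ⟨Sum.inr (true, t₁, t₂, t₃), funext fun x => ?_⟩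
      have hsg : sgn true = Y none := by rw [h1]; rfl
      rcases x with _ | (j | j | j)
      · exact hsg
      · show prefF n (sgn true) t₁ j = Y (some (Sum.inl j))
        rw [hsg]
        exact (congrFun ht1 j).symm
      · show prefF m (sgn true) t₂ j = Y (some (Sum.inr (Sum.inl j)))
        rw [hsg]
        exact (congrFun ht2 j).symm
      · show prefF k (sgn true) t₃ j = Y (some (Sum.inr (Sum.inr j)))
        rw [hsg]
        exact (congrFun ht3 j).symm
    · refine ⟨Sum.inr (false, t₁, t₂, t₃), funext fun x => ?_⟩
      have hsg : sgn false = Y none := by rw [h1]; rfl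
      rcases x with _ | (j | j | j)
      · exact hsg
      · show prefF n (sgn false) t₁ j = Y (some (Sum.inl j))
        rw [hsg]
        exact (congrFun ht1 j).symm
      · show prefF m (sgn false) t₂ j = Y (some (Sum.inr (Sum.inl j)))
        rw [hsg]
        exact (congrFun ht2 j).symm
      · show prefF k (sgn false) t₃ j = Y (some (Sum.inr (Sum.inr j)))
        rw [hsg]
        exact (congrFun ht3 j).symm

end Main

section Inj
variable {n m k : ℕ}

lemma prefF_inj {N : ℕ} {ε : ℤ} (hε : ε ≠ 0) {t t' : Fin (N+1)}
    (h : prefF N ε t = prefF N ε t') : t = t' := by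
  have hd : ∀ i, (if i = t.1 then ε else 0) = (if i = t'.1 then ε else 0) := by
    intro i
    rw [← dseq_prefF N ε t i, h, dseq_prefF]
  have h1 := hd t.1
  rw [if_pos rfl] at h1
  apply Fin.val_injective
  by_contra h3
  rw [if_neg h3] at h1
  exact hε h1

lemma intF_inj {N : ℕ} {a b a' b' : Fin (N+1)} (hab : a.1 ≠ b.1) (hab' : a'.1 ≠ b'.1)
    (h : intF N a b = intF N a' b') : a = a' ∧ b = b' := by
  have hd : ∀ i, (if i = a.1 then (-1:ℤ) else if i = b.1 then 1 else 0)
      = (if i = a'.1 then -1 else if i = b'.1 then 1 else 0) := by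
    intro i
    rw [← dseq_intF N a b hab i, h, dseq_intF N a' b' hab']
  have h1 := hd a.1
  have h2 := hd b.1
  rw [if_pos rfl] at h1
  rw [if_neg (fun hh => hab hh.symm), if_pos rfl] at h2
  constructor
  · apply Fin.val_injective
    by_contra h3
    rw [if_neg h3] at h1
    split_ifs at h1 <;> omega
  · apply Fin.val_injective
    by_contra h3
    by_cases h4 : b.1 = a'.1
    · rw [if_pos h4] at h2; omega
    · rw [if_neg h4, if_neg h3] at h2; omega

lemma sgn_inj {s s' : Bool} (h : sgn s = sgn s') : s = s' := by
  cases s <;> cases s' <;> simp_all [sgn]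

lemma fmap_inj : Function.Injective (fmap n m k) := by
  rintro p q h
  rcases p with ((⟨⟨a, b⟩, hab⟩ | ⟨⟨a, b⟩, hab⟩ | ⟨⟨a, b⟩, hab⟩) | ⟨s, t₁, t₂, t₃⟩) <;>
    rcases q with ((⟨⟨a', b'⟩, hab'⟩ | ⟨⟨a', b'⟩, hab'⟩ | ⟨⟨a', b'⟩, hab'⟩) | ⟨s', t₁', t₂', t₃'⟩) <;>
    [skip; skip; skip; skip; skip; skip; skip; skip; skip; skip; skip; skip; skip; skip; skip; skip]
  -- 1,1
  · have hv : a.1 ≠ b.1 := fun hh => hab (Fin.val_injective hh)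
    have hv' : a'.1 ≠ b'.1 := fun hh => hab' (Fin.val_injective hh)
    have hcomp : intF n a b = intF n a' b' := funext fun j => congrFun h (some (Sum.inl j))
    obtain ⟨e1, e2⟩ := intF_inj hv hv' hcomp
    subst e1; subst e2; rfl
  · have hv : a.1 ≠ b.1 := fun hh => hab (Fin.val_injective hh)
    obtain ⟨j, hj⟩ := intF_ne a b hv
    exact absurd (congrFun h (some (Sum.inl j))) hj
  · have hv : a.1 ≠ b.1 := fun hh => hab (Fin.val_injective hh)
    obtain ⟨j, hj⟩ := intF_ne a b hv
    exact absurd (congrFun h (some (Sum.inl j))) hj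
  · exact absurd (congrFun h none).symm (sgn_ne_zero s')
  -- 2,1
  · have hv : a.1 ≠ b.1 := fun hh => hab (Fin.val_injective hh)
    obtain ⟨j, hj⟩ := intF_ne a b hv
    exact absurd (congrFun h (some (Sum.inr (Sum.inl j)))) hj
  · have hv : a.1 ≠ b.1 := fun hh => hab (Fin.val_injective hh)
    have hv' : a'.1 ≠ b'.1 := fun hh => hab' (Fin.val_injective hh)
    have hcomp : intF m a b = intF m a' b' :=
      funext fun j => congrFun h (some (Sum.inr (Sum.inl j)))
    obtain ⟨e1, e2⟩ := intF_inj hv hv' hcomp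
    subst e1; subst e2; rfl
  · have hv : a.1 ≠ b.1 := fun hh => hab (Fin.val_injective hh)
    obtain ⟨j, hj⟩ := intF_ne a b hv
    exact absurd (congrFun h (some (Sum.inr (Sum.inl j)))) hj
  · exact absurd (congrFun h none).symm (sgn_ne_zero s')
  -- 3,1
  · have hv : a.1 ≠ b.1 := fun hh => hab (Fin.val_injective hh)
    obtain ⟨j, hj⟩ := intF_ne a b hv
    exact absurd (congrFun h (some (Sum.inr (Sum.inr j)))) hj
  · have hv : a.1 ≠ b.1 := fun hh => hab (Fin.val_injective hh)
    obtain ⟨j, hj⟩ := intF_ne a b hv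
    exact absurd (congrFun h (some (Sum.inr (Sum.inr j)))) hj
  · have hv : a.1 ≠ b.1 := fun hh => hab (Fin.val_injective hh)
    have hv' : a'.1 ≠ b'.1 := fun hh => hab' (Fin.val_injective hh)
    have hcomp : intF k a b = intF k a' b' :=
      funext fun j => congrFun h (some (Sum.inr (Sum.inr j)))
    obtain ⟨e1, e2⟩ := intF_inj hv hv' hcomp
    subst e1; subst e2; rfl
  · exact absurd (congrFun h none).symm (sgn_ne_zero s')
  -- 4,*
  · exact absurd (congrFun h none) (sgn_ne_zero s)
  · exact absurd (congrFun h none) (sgn_ne_zero s)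
  · exact absurd (congrFun h none) (sgn_ne_zero s)
  · have hs : s = s' := sgn_inj (congrFun h none)
    subst hs
    have he1 : prefF n (sgn s) t₁ = prefF n (sgn s) t₁' :=
      funext fun j => congrFun h (some (Sum.inl j))
    have he2 : prefF m (sgn s) t₂ = prefF m (sgn s) t₂' :=
      funext fun j => congrFun h (some (Sum.inr (Sum.inl j)))
    have he3 : prefF k (sgn s) t₃ = prefF k (sgn s) t₃' :=
      funext fun j => congrFun h (some (Sum.inr (Sum.inr j)))
    have ht1 := prefF_inj (sgn_ne_zero s) he1
    have ht2 := prefF_inj (sgn_ne_zero s) he2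
    have ht3 := prefF_inj (sgn_ne_zero s) he3
    subst ht1; subst ht2; subst ht3; rfl

end Inj

section Count
variable (n m k : ℕ)

instance NE2.fintype (N : ℕ) : Fintype (NE2 N) := by
  unfold NE2; infer_instance

instance Param.fintype : Fintype (Param n m k) := by
  unfold Param; infer_instance

lemma card_NE2 (N : ℕ) : Fintype.card (NE2 N) = (N+1) * N := by
  have e : {p : Fin (N+1) × Fin (N+1) // p.1 = p.2} ≃ Fin (N+1) :=
    { toFun := fun x => x.1.1
      invFun := fun a => ⟨(a, a), rfl⟩
      left_inv := by
        rintro ⟨⟨a, b⟩, hh⟩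
        simp only at hh
        subst hh
        rfl
      right_inv := fun a => rfl }
  have h1 : Fintype.card {p : Fin (N+1) × Fin (N+1) // p.1 = p.2} = N + 1 := by
    rw [Fintype.card_congr e, Fintype.card_fin]
  have h2 := Fintype.card_subtype_compl (fun p : Fin (N+1) × Fin (N+1) => p.1 = p.2)
  have h3 : Fintype.card (Fin (N+1) × Fin (N+1)) = (N+1) * (N+1) := by
    simp [Fintype.card_prod]
  have h4 : Fintype.card (NE2 N)
      = Fintype.card {p : Fin (N+1) × Fin (N+1) // ¬ p.1 = p.2} := rfl
  rw [h4, h2, h1, h3]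
  have : (N+1) * (N+1) = (N+1) * N + (N+1) := by ring
  omega

lemma card_Param : Fintype.card (Param n m k)
    = (n+1) * n + (m+1) * m + (k+1) * k + 2 * ((n+1) * ((m+1) * (k+1))) := by
  have h : Fintype.card (Param n m k)
      = Fintype.card (NE2 n) + (Fintype.card (NE2 m) + Fintype.card (NE2 k))
        + 2 * ((n+1) * ((m+1) * (k+1))) := by
    unfold Param
    simp [Fintype.card_sum, Fintype.card_prod, Fintype.card_fin]
    try ring
  rw [h, card_NE2, card_NE2, card_NE2]
  ring

end Count
end Stmt6

theorem stmt_6 (n m k : ℕ) :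
    {Y : AnmkV n m k → ℤ | Y ≠ 0 ∧ ((∀ i, 0 ≤ Y i) ∨ (∀ i, Y i ≤ 0)) ∧
      (AnmkQ n m k Y = -2 ∨ AnmkQ n m k Y = -3)}.ncard
    = n ^ 2 + m ^ 2 + k ^ 2 + n + m + k + 2 * (n + 1) * (m + 1) * (k + 1) := by
  have hset : {Y : AnmkV n m k → ℤ | Y ≠ 0 ∧ ((∀ i, 0 ≤ Y i) ∨ (∀ i, Y i ≤ 0)) ∧
      (AnmkQ n m k Y = -2 ∨ AnmkQ n m k Y = -3)} = Set.range (Stmt6.fmap n m k) := by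
    ext Y
    simp only [Set.mem_setOf_eq, Set.mem_range]
    constructor
    · rintro ⟨-, -, h3⟩
      exact Stmt6.mem_fmap_range Y h3
    · rintro ⟨p, rfl⟩
      exact Stmt6.fmap_mem p
  rw [hset, ← Set.image_univ, Set.ncard_image_of_injective _ Stmt6.fmap_inj,
    Set.ncard_univ, Nat.card_eq_fintype_card, Stmt6.card_Param]
  ring
end
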